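/- Let T be a set of finite strings of natural numbers closed under prefixes, and suppose T has no infinite branch (there is no x : ℕ → ℕ all of whose finite initial segments lie in T). Define the Kleene–Brouwer order on T by: σ <_KB τ iff τ is a proper prefix of σ, or there is i < min(|σ|,|τ|) with σ↾i = τ↾i and σ(i) < τ(i). Then <_KB is a linear order on T which is well-founded; i.e., it well-orders T. -/

import Mathlib

/-- The Kleene–Brouwer order on finite strings of naturals. -/
def kb (σ τ : List ℕ) : Prop :=
  (τ <+: σ ∧ τ ≠ σ) ∨
    ∃ i, i < σ.length ∧ i < τ.length ∧ σ.take i = τ.take i ∧ σ.getD i 0 < τ.getD i 0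

lemma take_eq_getD {σ τ : List ℕ} {n j : ℕ} (h : σ.take n = τ.take n) (hj : j < n)
    (h1 : j < σ.length) (h2 : j < τ.length) : σ.getD j 0 = τ.getD j 0 := by
  rw [List.getD_eq_getElem _ _ h1, List.getD_eq_getElem _ _ h2]
  have : (σ.take n)[j]'(by simp; omega) = (τ.take n)[j]'(by simp; omega) := by
    simp only [h]
  simpa [List.getElem_take] using this

lemma take_eq_mono {σ τ : List ℕ} {n j : ℕ} (h : σ.take n = τ.take n) (hj : j ≤ n) :
    σ.take j = τ.take j := by
  have := congrArg (List.take j) h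
  simpa [List.take_take, Nat.min_eq_left hj] using this

lemma take_eq_of_getD {σ τ : List ℕ} {m : ℕ} (h1 : m ≤ σ.length) (h2 : m ≤ τ.length)
    (h : ∀ j < m, σ.getD j 0 = τ.getD j 0) : σ.take m = τ.take m := by
  apply List.ext_getElem (by simp; omega)
  intro n hn1 hn2
  simp only [List.getElem_take]
  have hn : n < m := by simp at hn1; omega
  have := h n hn
  rwa [List.getD_eq_getElem σ 0 (show n < σ.length by omega),
    List.getD_eq_getElem τ 0 (show n < τ.length by omega)] at this

lemma prefix_take_eq {s l : List ℕ} (h : s <+: l) {j : ℕ} (hj : j ≤ s.length) :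
    s.take j = l.take j := by
  have hs := List.prefix_iff_eq_take.mp h
  rw [hs, List.take_take, Nat.min_eq_left hj]

lemma prefix_getD_eq {s l : List ℕ} (h : s <+: l) {j : ℕ} (hj : j < s.length) :
    s.getD j 0 = l.getD j 0 := by
  rw [List.getD_eq_getElem _ _ hj, List.getD_eq_getElem _ _ (lt_of_lt_of_le hj h.length_le)]
  exact h.getElem hj

lemma kb_irrefl (σ : List ℕ) : ¬ kb σ σ := by
  rintro (⟨_, h⟩ | ⟨i, _, _, _, h⟩)
  · exact h rfl
  · exact lt_irrefl _ h

lemma kb_ne_nil {σ τ : List ℕ} (h : kb σ τ) : σ ≠ [] := by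
  rintro rfl
  rcases h with ⟨h, hne⟩ | ⟨i, hi, _⟩
  · exact hne (List.prefix_nil.mp h)
  · simp at hi

lemma kb_trans {σ τ ρ : List ℕ} (h1 : kb σ τ) (h2 : kb τ ρ) : kb σ ρ := by
  rcases h1 with ⟨hp1, hne1⟩ | ⟨i, hi1, hi2, ht1, hl1⟩
  · rcases h2 with ⟨hp2, hne2⟩ | ⟨j, hj1, hj2, ht2, hl2⟩
    · refine Or.inl ⟨hp2.trans hp1, fun h => hne1 ?_⟩
      exact hp1.eq_of_length (le_antisymm hp1.length_le (by rw [← h]; exact hp2.length_le))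
    · refine Or.inr ⟨j, lt_of_lt_of_le hj1 hp1.length_le, hj2, ?_, ?_⟩
      · rw [← prefix_take_eq hp1 hj1.le]; exact ht2
      · rw [← prefix_getD_eq hp1 hj1]; exact hl2
  · rcases h2 with ⟨hp2, hne2⟩ | ⟨j, hj1, hj2, ht2, hl2⟩
    · by_cases hc : i < ρ.length
      · refine Or.inr ⟨i, hi1, hc, ?_, ?_⟩
        · rw [ht1, ← prefix_take_eq hp2 hc.le]
        · exact hl1.trans_eq (prefix_getD_eq hp2 hc).symm
      · push_neg at hc
        have hρ := List.prefix_iff_eq_take.mp hp2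
        have hts : σ.take ρ.length = τ.take ρ.length := take_eq_mono ht1 hc
        refine Or.inl ⟨List.prefix_iff_eq_take.mpr (hρ.trans hts.symm), fun h => ?_⟩
        rw [← h] at hi1
        omega
    · rcases lt_trichotomy i j with h | rfl | h
      · refine Or.inr ⟨i, hi1, by omega, ?_, ?_⟩
        · rw [ht1, take_eq_mono ht2 h.le]
        · exact hl1.trans_eq (take_eq_getD ht2 h hi2 (by omega))
      · exact Or.inr ⟨i, hi1, hj2, ht1.trans ht2, hl1.trans hl2⟩
      · refine Or.inr ⟨j, by omega, hj2, ?_, ?_⟩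
        · rw [take_eq_mono ht1 h.le, ht2]
        · exact (take_eq_getD ht1 h (by omega) (by omega)).trans_lt hl2

lemma kb_total {σ τ : List ℕ} (h : σ ≠ τ) : kb σ τ ∨ kb τ σ := by
  classical
  by_cases hd : ∃ i, i < σ.length ∧ i < τ.length ∧ σ.getD i 0 ≠ τ.getD i 0
  · have hi := Nat.find_spec hd
    set i := Nat.find hd with hidef
    have htake : σ.take i = τ.take i := by
      refine take_eq_of_getD hi.1.le hi.2.1.le (fun j hj => ?_)
      have hmin := Nat.find_min hd hj
      push_neg at hmin
      exact hmin (by omega) (by omega)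
    rcases Nat.lt_or_ge (σ.getD i 0) (τ.getD i 0) with h' | h'
    · exact Or.inl (Or.inr ⟨i, hi.1, hi.2.1, htake, h'⟩)
    · have h'' : τ.getD i 0 < σ.getD i 0 := by
        have := hi.2.2; omega
      exact Or.inr (Or.inr ⟨i, hi.2.1, hi.1, htake.symm, h''⟩)
  · push_neg at hd
    rcases Nat.le_total σ.length τ.length with hl | hl
    · have ht : σ.take σ.length = τ.take σ.length :=
        take_eq_of_getD le_rfl hl (fun j hj => hd j hj (lt_of_lt_of_le hj hl))
      rw [List.take_length] at ht
      exact Or.inr (Or.inl ⟨List.prefix_iff_eq_take.mpr ht, h⟩)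
    · have ht : τ.take τ.length = σ.take τ.length :=
        take_eq_of_getD le_rfl hl (fun j hj => (hd j (lt_of_lt_of_le hj hl) hj).symm)
      rw [List.take_length] at ht
      exact Or.inl (Or.inl ⟨List.prefix_iff_eq_take.mpr ht, fun e => h e.symm⟩)

theorem stmt_14 (T : Set (List ℕ))
    (hpref : ∀ σ τ : List ℕ, σ <+: τ → τ ∈ T → σ ∈ T)
    (hwf : ¬ ∃ x : ℕ → ℕ, ∀ n : ℕ, (List.ofFn fun i : Fin n => x i) ∈ T) :
    IsStrictTotalOrder {σ // σ ∈ T} (fun a b => kb a.1 b.1) ∧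
      WellFounded (fun a b : {σ // σ ∈ T} => kb a.1 b.1) := by
  haveI h_ir : IsIrrefl {σ // σ ∈ T} (fun a b => kb a.1 b.1) := ⟨fun a => kb_irrefl a.1⟩
  haveI h_tr : IsTrans {σ // σ ∈ T} (fun a b => kb a.1 b.1) := ⟨fun _ _ _ => kb_trans⟩
  haveI h_tri : IsTrichotomous {σ // σ ∈ T} (fun a b => kb a.1 b.1) := by
    refine ⟨fun a b => ?_⟩
    rcases eq_or_ne a b with rfl | h
    · exact fun _ _ => rfl
    · rcases kb_total (fun he => h (Subtype.ext he)) with h' | h'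
      exacts [fun h1 _ => absurd h' h1, fun _ h2 => absurd h' h2]
  haveI hso : IsStrictOrder {σ // σ ∈ T} (fun a b => kb a.1 b.1) := ⟨⟩
  haveI hsto : IsStrictTotalOrder {σ // σ ∈ T} (fun a b => kb a.1 b.1) := ⟨⟩
  refine ⟨hsto, ?_⟩
  rw [RelEmbedding.wellFounded_iff_isEmpty]
  refine ⟨fun e => ?_⟩
  set f : ℕ → List ℕ := fun n => (e n).1 with hf
  have hfT : ∀ n, f n ∈ T := fun n => (e n).2
  have hstep : ∀ n, kb (f (n + 1)) (f n) := fun n => e.map_rel_iff.mpr (Nat.lt_succ_self n)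
  have hchain : ∀ m n, n < m → kb (f m) (f n) := by
    intro m
    induction m with
    | zero => omega
    | succ k ih =>
      intro n h
      rcases Nat.lt_succ_iff_lt_or_eq.mp h with h' | rfl
      · exact kb_trans (hstep k) (ih n h')
      · exact hstep n
  have key : ∀ k, ∃ s : List ℕ, ∃ N : ℕ, s.length = k ∧ ∀ n, N ≤ n → (s <+: f n ∧ f n ≠ s) := by
    intro k
    induction k with
    | zero =>
      refine ⟨[], 1, rfl, fun n hn => ⟨List.nil_prefix, ?_⟩⟩
      cases n with
      | zero => omega
      | succ m => exact kb_ne_nil (hstep m)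
    | succ k ih =>
      obtain ⟨s, N, hsl, hs⟩ := ih
      have hlen : ∀ n, N ≤ n → k < (f n).length := by
        intro n hn
        have h1 := (hs n hn).1.length_le
        rcases Nat.lt_or_ge k (f n).length with h | h
        · exact h
        · exact absurd ((hs n hn).1.eq_of_length (by omega)).symm (hs n hn).2
      set g : ℕ → ℕ := fun n => (f n).getD k 0 with hg
      have hmono : ∀ n, N ≤ n → g (n + 1) ≤ g n := by
        intro n hn
        show (f (n + 1)).getD k 0 ≤ (f n).getD k 0
        rcases hstep n with ⟨hp, hne⟩ | ⟨i, hi1, hi2, ht, hl⟩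
        · exact le_of_eq (prefix_getD_eq hp (hlen n hn)).symm
        · rcases lt_trichotomy i k with h | rfl | h
          · have e1 := prefix_getD_eq (hs (n + 1) (by omega)).1 (show i < s.length by omega)
            have e2 := prefix_getD_eq (hs n hn).1 (show i < s.length by omega)
            omega
          · exact le_of_lt hl
          · have := take_eq_getD ht h (hlen (n + 1) (by omega)) (hlen n hn)
            omega
      have hmono' : ∀ d n, N ≤ n → g (n + d) ≤ g n := by
        intro d
        induction d with
        | zero => intro n _; simp
        | succ d ih =>
          intro n hn
          show g (n + d + 1) ≤ g n
          have h1 := hmono (n + d) (by omega)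
          have h2 := ih n hn
          omega
      obtain ⟨a, ⟨N', hN', ha⟩, hmin⟩ :=
        Nat.lt_wfRel.wf.has_min {v | ∃ n, N ≤ n ∧ g n = v} ⟨g N, N, le_rfl, rfl⟩
      have hconst : ∀ n, N' ≤ n → g n = a := by
        intro n hn
        have h1 : g n ≤ a := by
          have := hmono' (n - N') N' hN'
          rw [show N' + (n - N') = n by omega] at this
          omega
        have h2 : ¬ g n < a := hmin (g n) ⟨n, by omega, rfl⟩
        omega
      have htake : ∀ n, N' ≤ n → (f n).take (k + 1) = s ++ [a] := by
        intro n hn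
        have hNn : N ≤ n := le_trans hN' hn
        have hk := hlen n hNn
        apply List.ext_getElem (by simp [hsl]; omega)
        intro j hj1 hj2
        rw [List.getElem_take]
        have hjk : j < k + 1 := by simp [hsl] at hj2; omega
        rcases Nat.lt_or_ge j k with h | h
        · rw [List.getElem_append_left (by omega)]
          exact ((hs n hNn).1.getElem (by omega)).symm
        · have hjek : j = k := by omega
          subst hjek
          have hga : (f n).getD j 0 = a := hconst n hn
          rw [List.getD_eq_getElem _ _ hk] at hga
          rw [hga, List.getElem_append_right (by omega)]
          simp [hsl]
      have hpre' : ∀ n, N' ≤ n → (s ++ [a]) <+: f n := by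
        intro n hn
        rw [List.prefix_iff_eq_take]
        rw [show (s ++ [a]).length = k + 1 by simp [hsl]]
        exact (htake n hn).symm
      by_cases hex : ∃ n, N' ≤ n ∧ f n = s ++ [a]
      · obtain ⟨n0, hn0, he⟩ := hex
        refine ⟨s ++ [a], n0 + 1, by simp [hsl], fun n hn => ⟨hpre' n (by omega), ?_⟩⟩
        intro hEq
        have := hchain n n0 (by omega)
        rw [hEq, he] at this
        exact kb_irrefl _ this
      · push_neg at hex
        exact ⟨s ++ [a], N', by simp [hsl], fun n hn => ⟨hpre' n hn, hex n hn⟩⟩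
  choose s N hsl hsp using key
  have hcoh : ∀ k k', k ≤ k' → s k <+: s k' := by
    intro k k' h
    have h1 := (hsp k (max (N k) (N k')) (le_max_left _ _)).1
    have h2 := (hsp k' (max (N k) (N k')) (le_max_right _ _)).1
    exact List.prefix_of_prefix_length_le h1 h2 (by rw [hsl, hsl]; exact h)
  apply absurd _ hwf
  refine ⟨fun i => (s (i + 1)).getD i 0, fun n => ?_⟩
  have heq : (List.ofFn fun i : Fin n => (s (i.1 + 1)).getD i.1 0) = s n := by
    apply List.ext_getElem (by simp [hsl])
    intro j h1 h2
    simp only [List.getElem_ofFn]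
    have hj1 : j < n := by simpa using h1
    have hpre := hcoh (j + 1) n (by omega)
    rw [List.getD_eq_getElem _ _ (by rw [hsl]; omega)]
    exact hpre.getElem (by rw [hsl]; omega)
  rw [heq]
  exact hpref _ _ (hsp n (N n) le_rfl).1 (hfT (N n))
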